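/- Let Q be a commutative unital quantale. The quantale space of all proper ideals of Q is sober: every irreducible closed subset is the closure of a unique point. -/

import Mathlib

namespace QuantalePaper

/-- An ideal of a complete lattice: nonempty, downward closed, closed under binary joins. -/
structure QIdeal (Q : Type*) [CompleteLattice Q] where
  carrier : Set Q
  nonempty' : carrier.Nonempty
  sup_mem' : ∀ ⦃x⦄, x ∈ carrier → ∀ ⦃y⦄, y ∈ carrier → x ⊔ y ∈ carrier
  lower' : ∀ ⦃x⦄, x ∈ carrier → ∀ ⦃l : Q⦄, l ≤ x → l ∈ carrier

namespace QIdeal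

variable {Q : Type*} [CompleteLattice Q]

instance : SetLike (QIdeal Q) Q where
  coe := carrier
  coe_injective := by rintro ⟨a,_,_,_⟩ ⟨b,_,_,_⟩ h; simpa using h

instance : PartialOrder (QIdeal Q) := .ofSetLike (QIdeal Q) Q

/-- A proper ideal. -/
def IsProper (I : QIdeal Q) : Prop := (⊤ : Q) ∉ I

/-- A maximal ideal: a proper ideal maximal among proper ideals. -/
def IsMaximal (I : QIdeal Q) : Prop :=
  I.IsProper ∧ ∀ J : QIdeal Q, J.IsProper → I ≤ J → J = I

/-- A prime ideal. -/
def IsPrime [Mul Q] (I : QIdeal Q) : Prop :=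
  I.IsProper ∧ ∀ x y : Q, x * y ∈ I → x ∈ I ∨ y ∈ I

end QIdeal

variable {Q : Type*} [CompleteLattice Q]

/-- The subbasic closed set `I↑ ∩ Σ` inside the subtype of a class `S` of ideals. -/
def up (S : Set (QIdeal Q)) (I : QIdeal Q) : Set ↥S := {J : ↥S | (I : Set Q) ⊆ (J : QIdeal Q)}

/-- The quantale topology on a class `S` of ideals, generated by the sets `up S I`
as a subbasis of closed sets. -/
def qTop (S : Set (QIdeal Q)) : TopologicalSpace ↥S :=
  .generateFrom {U | ∃ I : QIdeal Q, U = (up S I)ᶜ}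

/-- `X↑` for a set `X` of ideals: members of `S` containing the intersection `⋀X`,
with `∅↑ = ∅`. -/
def upSet (S : Set (QIdeal Q)) (X : Set (QIdeal Q)) : Set ↥S :=
  {J : ↥S | X.Nonempty ∧ ∀ x : Q, (∀ I ∈ X, x ∈ I) → x ∈ (J : QIdeal Q)}

-- auxiliary lemmas
lemma bot_mem_qideal (I : QIdeal Q) : (⊥ : Q) ∈ I := by
  obtain ⟨a, ha⟩ := I.nonempty'
  exact I.lower' ha bot_le

lemma isClosed_up (S : Set (QIdeal Q)) (I : QIdeal Q) :
    @IsClosed ↥S (qTop S) (up S I) := by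
  letI : TopologicalSpace ↥S := qTop S
  rw [← isOpen_compl_iff]
  exact TopologicalSpace.GenerateOpen.basic _ ⟨I, rfl⟩

lemma qTop_open_downclosed {S : Set (QIdeal Q)} {U : Set ↥S}
    (hU : @IsOpen ↥S (qTop S) U) {x y : ↥S} (hxy : (x.1 : Set Q) ⊆ (y.1 : Set Q))
    (hy : y ∈ U) : x ∈ U := by
  induction hU with
  | basic u hu =>
      obtain ⟨I, rfl⟩ := hu
      intro hx
      exact hy (hx.trans hxy)
  | univ => trivial
  | inter u v _ _ ihu ihv => exact ⟨ihu hy.1, ihv hy.2⟩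
  | sUnion s _ ih =>
      obtain ⟨t, ht, hyt⟩ := hy
      exact ⟨t, ht, ih t ht hyt⟩

lemma closure_singleton_eq (S : Set (QIdeal Q)) (x : ↥S) :
    @closure ↥S (qTop S) {x} = up S x.1 := by
  letI : TopologicalSpace ↥S := qTop S
  apply le_antisymm
  · exact closure_minimal (by simpa [up] using subset_rfl) (isClosed_up S x.1)
  · intro y hy
    rw [mem_closure_iff]
    intro U hU hyU
    exact ⟨x, qTop_open_downclosed hU hy hyU, rfl⟩

theorem stmt11 [CommMonoid Q] [IsQuantale Q] (htop : (1 : Q) = ⊤) :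
    @QuasiSober ↥{I : QIdeal Q | I.IsProper} (qTop {I : QIdeal Q | I.IsProper}) ∧
    @T0Space ↥{I : QIdeal Q | I.IsProper} (qTop {I : QIdeal Q | I.IsProper}) := by
  set S : Set (QIdeal Q) := {I : QIdeal Q | I.IsProper} with hS
  letI : TopologicalSpace ↥S := qTop S
  constructor
  · constructor
    intro K hirr hcl
    -- generic point: intersection of all ideals in K
    obtain ⟨w, hw⟩ := hirr.1
    set I₀ : QIdeal Q :=
      { carrier := {q : Q | ∀ J ∈ K, q ∈ (J : ↥S).1}
        nonempty' := ⟨⊥, fun J _ => bot_mem_qideal J.1⟩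
        sup_mem' := fun x hx y hy J hJ => J.1.sup_mem' (hx J hJ) (hy J hJ)
        lower' := fun x hx l hl J hJ => J.1.lower' (hx J hJ) hl } with hI₀
    have hproper : I₀ ∈ S := by
      intro htopmem
      exact w.2 (htopmem w hw)
    refine ⟨⟨I₀, hproper⟩, ?_⟩
    have hxK : (⟨I₀, hproper⟩ : ↥S) ∈ K := by
      by_contra hx
      have hopen : IsOpen Kᶜ := hcl.isOpen_compl
      obtain ⟨v, ⟨f, ⟨hfin, hsub⟩, rfl⟩, hxv, hvK⟩ :=
        (TopologicalSpace.isTopologicalBasis_of_subbasis rfl).exists_subset_of_mem_open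
          (Set.mem_compl hx) hopen
      -- K ⊆ ⋃ of complements of elements of f, all closed subbasics
      classical
      set Z : Finset (Set ↥S) := hfin.toFinset.image compl with hZ
      have hZclosed : ∀ z ∈ Z, IsClosed z := by
        intro z hz
        simp only [hZ, Finset.mem_image, Set.Finite.mem_toFinset] at hz
        obtain ⟨g, hg, rfl⟩ := hz
        obtain ⟨I, rfl⟩ := hsub hg
        rw [compl_compl]
        exact isClosed_up S I
      have hKZ : K ⊆ ⋃₀ ↑Z := by
        intro y hy
        have : y ∉ ⋂₀ f := fun h => hvK h hy
        have : ∃ g ∈ f, y ∉ g := by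
          simpa [Set.mem_sInter, not_forall] using this
        obtain ⟨g, hg, hyg⟩ := this
        refine ⟨gᶜ, ?_, hyg⟩
        simp only [hZ, Finset.coe_image, Set.Finite.coe_toFinset, Set.mem_image]
        exact ⟨g, hg, rfl⟩
      obtain ⟨z, hzZ, hKz⟩ := (isIrreducible_iff_sUnion_isClosed.mp hirr) Z hZclosed hKZ
      simp only [hZ, Finset.mem_image, Set.Finite.mem_toFinset] at hzZ
      obtain ⟨g, hg, rfl⟩ := hzZ
      obtain ⟨I, rfl⟩ := hsub hg
      rw [compl_compl] at hKz
      -- I ⊆ I₀, hence x ∈ up S I = gᶜ, contradicting x ∈ g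
      have hI : (I : Set Q) ⊆ (I₀ : Set Q) := by
        intro q hq J hJ
        exact hKz hJ hq
      exact (hxv _ hg) hI
    -- closure {x} = K
    rw [IsGenericPoint, closure_singleton_eq]
    apply le_antisymm
    · -- up S I₀ ⊆ K : up S I₀ = closure {x} ⊆ K since K closed
      rw [← closure_singleton_eq]
      exact closure_minimal (Set.singleton_subset_iff.mpr hxK) hcl
    · intro J hJ
      intro q hq
      exact hq J hJ
  · rw [t0Space_iff_inseparable]
    intro x y hxy
    rw [inseparable_iff_closure_eq, closure_singleton_eq, closure_singleton_eq] at hxy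
    have h1 : (x.1 : Set Q) ⊆ (y.1 : Set Q) := by
      have : y ∈ up S x.1 := by rw [hxy]; exact fun q hq => hq
      exact this
    have h2 : (y.1 : Set Q) ⊆ (x.1 : Set Q) := by
      have : x ∈ up S y.1 := by rw [← hxy]; exact fun q hq => hq
      exact this
    exact Subtype.ext (SetLike.coe_injective (le_antisymm h1 h2))


end QuantalePaper
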